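/- Tropical Y-monomials stay monomials: let P = Trop(y_1,...,y_n) and suppose each Y_j = ∏_i y_i^{c_{ij}} is a Laurent monomial (no tropical addition needed), with exchange polynomial Z_k having tropical coefficients z_{k,s} = 1 for all s. Then the generalized coefficient mutation Y'_k = Y_k^{-1}, Y'_j = Y_j (Y_k^{d_k})^{[b_{kj}]_+} (⊕_{s=0}^{d_k} Y_k^s)^{-b_{kj}} (j ≠ k), again yields Laurent monomials, and the new exponent matrix C' = (c'_{ij}) is given by c'_{ij} = -c_{ik} if j = k and c'_{ij} = c_{ij} + c_{ik}[d_k b_{kj}]_+ + [-c_{ik}]_+ d_k b_{kj} if j ≠ k, provided each column c_k of C is sign-coherent (all entries ≥ 0 or all entries ≤ 0). -/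

import Mathlib

lemma inf_mul_eq (dk : ℕ) (c : ℤ) :
    (Finset.range (dk + 1)).inf' (by simp) (fun s => (s : ℤ) * c)
      = if 0 ≤ c then 0 else dk * c := by
  split_ifs with h
  · apply le_antisymm
    · have := Finset.inf'_le (s := Finset.range (dk+1)) (fun s => (s : ℤ) * c)
        (Finset.mem_range.mpr (Nat.succ_pos dk))
      simpa only [Nat.cast_zero, zero_mul] using this
    · apply Finset.le_inf'
      intro s hs
      positivity
  · push_neg at h
    apply le_antisymm
    · have := Finset.inf'_le (s := Finset.range (dk+1)) (fun s => (s : ℤ) * c)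
        (Finset.mem_range.mpr (Nat.lt_succ_self dk))
      exact this
    · apply Finset.le_inf'
      intro s hs
      simp only [Finset.mem_range, Nat.lt_succ_iff] at hs
      have : (s : ℤ) ≤ dk := by exact_mod_cast hs
      nlinarith

/-- `[x]₊ = max(x,0)`. -/
def ppart (x : ℤ) : ℤ := max x 0

/-- Tropical `Y`-monomials stay monomials.  In `Trop(y₁,…,yₙ)` the `Y`-variables
`Yⱼ = ∏ᵢ yᵢ^{c_{ij}}` are encoded by their exponent vectors (columns of `C`):
multiplication is addition of exponents, `p`-th powers are scalar multiples and
`⊕` is the componentwise minimum, so `⊕_{s=0}^{d_k} Y_k^s` has exponent vector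
`i ↦ min_{0 ≤ s ≤ d_k} s·c_{ik}`.  Provided the `k`-th column of `C` is
sign-coherent, the exponent matrix of the mutated `Y`-variables is given by the
generalized `c`-vector recursion. -/
theorem tropical_y_mutation {n : ℕ} (dk : ℕ) (hdk : 0 < dk)
    (B C : Matrix (Fin n) (Fin n) ℤ) (k : Fin n)
    (hsc : (∀ i, 0 ≤ C i k) ∨ (∀ i, C i k ≤ 0)) :
    -- exponent vectors of the mutated Y-variables:
    -- `Y'_k = Y_k⁻¹`, and for `j ≠ k`,
    -- `Y'_j = Y_j (Y_k^{d_k})^{[b_{kj}]₊} (⊕_{s=0}^{d_k} Y_k^s)^{-b_{kj}}`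
    let C' : Matrix (Fin n) (Fin n) ℤ := fun i j => if j = k then -C i k
      else C i j + (dk : ℤ) * ppart (B k j) * C i k +
        (-(B k j)) * ((Finset.range (dk + 1)).inf' (by simp) (fun s => (s : ℤ) * C i k))
    -- the generalized c-vector recursion
    ∀ i j, C' i j = if j = k then -C i k
      else C i j + C i k * ppart ((dk : ℤ) * B k j) +
        ppart (-(C i k)) * ((dk : ℤ) * B k j) := by
  intro C' i j
  show (if j = k then -C i k else _) = _
  split_ifs with hjk
  · rfl
  · rw [inf_mul_eq]
    have hdk' : (0:ℤ) < dk := by exact_mod_cast hdk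
    have hpp : ppart ((dk : ℤ) * B k j) = (dk : ℤ) * ppart (B k j) := by
      unfold ppart
      rcases le_or_gt (B k j) 0 with h | h
      · rw [max_eq_right (by nlinarith), max_eq_right h, mul_zero]
      · rw [max_eq_left (by nlinarith), max_eq_left h.le]
    rw [hpp]
    split_ifs with hc
    · have : ppart (-(C i k)) = 0 := by unfold ppart; omega
      rw [this]; ring
    · push_neg at hc
      have : ppart (-(C i k)) = -(C i k) := by unfold ppart; omega
      rw [this]; ring
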